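/- Let n ≥ 1, let E ⊆ ℝ be a (2^ℵ₀, n)-entangled set of reals, and let g : F → E be a function where F ⊆ Eⁿ has cardinality 2^ℵ₀ and consists of injective, pairwise disjoint n-tuples. If g has 2^ℵ₀-many discontinuity points, then for every t ∈ 2^(n+1) there are two distinct points x, y on the graph of g (viewed as (n+1)-tuples) that realize t. -/

import Mathlib

open Cardinal

def Realizes {n : ℕ} (t : Fin n → Bool) (e e' : Fin n → ℝ) : Prop :=
  (∀ i, t i = true ↔ e' i < e i) ∨ (∀ i, t i = true ↔ e i < e' i)

/-- `E ⊆ ℝ` is `(κ, n)`-entangled. -/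
def EntangledSet (κ : Cardinal) (n : ℕ) (E : Set ℝ) : Prop :=
  κ ≤ #E ∧
  ∀ F : Set (Fin n → ℝ),
    (∀ e ∈ F, ∀ i, e i ∈ E) →
    (∀ e ∈ F, Function.Injective e) →
    (F.Pairwise fun e e' => ∀ i j, e i ≠ e' j) →
    #F = κ →
    ∀ t : Fin n → Bool, ∃ e ∈ F, ∃ e' ∈ F, e ≠ e' ∧ Realizes t e e'

/-- Countable-to-one pigeonhole at the continuum. -/
lemma continuum_pigeonhole {β : Type} {α : Type} [Countable α] [Infinite α] (f : β → α)
    (hβ : Cardinal.continuum ≤ #β) : ∃ a : α, Cardinal.continuum ≤ #(f ⁻¹' {a}) := by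
  apply Cardinal.infinite_pigeonhole_card f Cardinal.continuum hβ aleph0_le_continuum
  rw [Cardinal.mk_eq_aleph0 α, ← Cardinal.two_power_aleph0]
  exact Cardinal.lt_cof_power le_rfl one_lt_two

/-- If `g : F → E`, with `F` a continuum-sized family of injective pairwise
disjoint `n`-tuples of a `(2^ℵ₀, n)`-entangled set `E`, has continuum many
discontinuity points, then every `t ∈ 2^(n+1)` is realized by two distinct
points of the graph of `g`. -/
theorem graph_realizes_of_many_discontinuities (n : ℕ) (hn : 1 ≤ n) (E : Set ℝ)
    (hE : EntangledSet Cardinal.continuum n E)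
    (F : Set (Fin n → ℝ)) (g : (Fin n → ℝ) → ℝ)
    (hFE : ∀ e ∈ F, ∀ i, e i ∈ E)
    (hinj : ∀ e ∈ F, Function.Injective e)
    (hdisj : F.Pairwise fun e e' => ∀ i j, e i ≠ e' j)
    (hFcard : #F = Cardinal.continuum)
    (hgE : ∀ e ∈ F, g e ∈ E)
    (hdiscont : #{e : F | ¬ContinuousAt (fun x : F => g x.1) e} = Cardinal.continuum) :
    ∀ t : Fin (n + 1) → Bool, ∃ e ∈ F, ∃ e' ∈ F, e ≠ e' ∧
      Realizes t (Fin.snoc e (g e)) (Fin.snoc e' (g e')) := by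
  classical
  intro t
  have hne : Nonempty (Fin n) := ⟨⟨0, hn⟩⟩
  set s : Fin n → Bool := fun j => t j.castSucc with hs_def
  set D : Set ↥F := {e : F | ¬ContinuousAt (fun x : F => g x.1) e} with hD_def
  -- Step 1: for each discontinuity point, a level `k` and a side `sg`
  have hsel : ∀ e : ↥F, e ∈ D → ∃ (k : ℕ) (sg : Bool), ∀ δ > (0:ℝ), ∃ w : ↥F,
      dist w e < δ ∧ (if sg = true then g e.1 + 1/((k:ℝ)+1) ≤ g w.1
        else g w.1 ≤ g e.1 - 1/((k:ℝ)+1)) := by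
    intro e he
    rw [hD_def, Set.mem_setOf_eq, Metric.continuousAt_iff] at he
    push_neg at he
    obtain ⟨ε, hε, hwit⟩ := he
    obtain ⟨k, hk⟩ := exists_nat_one_div_lt hε
    by_cases hlow : ∀ δ > (0:ℝ), ∃ w : ↥F, dist w e < δ ∧ g w.1 ≤ g e.1 - 1/((k:ℝ)+1)
    · exact ⟨k, false, by simpa using hlow⟩
    · push_neg at hlow
      obtain ⟨δ₀, hδ₀, hno⟩ := hlow
      refine ⟨k, true, fun δ hδ => ?_⟩
      obtain ⟨w, hwd, hwe⟩ := hwit (min δ δ₀) (lt_min hδ hδ₀)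
      refine ⟨w, hwd.trans_le (min_le_left _ _), ?_⟩
      have h2 := hno w (hwd.trans_le (min_le_right _ _))
      rw [Real.dist_eq] at hwe
      rcases le_abs.1 hwe with h | h
      · rw [if_pos rfl]; linarith
      · exfalso; linarith
  choose! kk sg hksg using hsel
  -- Step 2: pigeonhole
  have hDcard : Cardinal.continuum ≤ #D := hdiscont.ge
  obtain ⟨⟨k₀, sg₀, m₀⟩, hfib⟩ := continuum_pigeonhole
    (fun e : ↥D => (kk e.1, sg e.1, ⌊g e.1.1 * (2*(kk e.1 : ℝ)+2)⌋)) hDcard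
  set c : ℝ := 1/((k₀:ℝ)+1) with hc_def
  set dd : ℝ := 2*(k₀:ℝ)+2 with hdd_def
  have hc : 0 < c := by positivity
  have hdd : 0 < dd := by positivity
  have hcd : c * dd = 2 := by
    rw [hc_def, hdd_def]
    have : ((k₀:ℝ)+1) ≠ 0 := by positivity
    field_simp
  set S' : Set (Fin n → ℝ) :=
    (fun d : ↥D => (d.1.1 : Fin n → ℝ)) ''
      ((fun e : ↥D => (kk e.1, sg e.1, ⌊g e.1.1 * (2*(kk e.1 : ℝ)+2)⌋)) ⁻¹' {(k₀, sg₀, m₀)})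
    with hS'_def
  have hS'F : S' ⊆ F := by
    rintro x ⟨e, _, rfl⟩; exact e.1.2
  have hS'card : #S' = Cardinal.continuum := by
    refine le_antisymm (hFcard ▸ Cardinal.mk_le_mk_of_subset hS'F) ?_
    rw [hS'_def, Cardinal.mk_image_eq
      (f := fun d : ↥D => (d.1.1 : Fin n → ℝ))
      (show Function.Injective (fun d : ↥D => (d.1.1 : Fin n → ℝ)) from
        Subtype.coe_injective.comp Subtype.coe_injective)]
    exact hfib
  -- Step 3: properties of members of S'
  have hprop : ∀ x ∈ S', ((m₀:ℝ) ≤ g x * dd ∧ g x * dd < (m₀:ℝ) + 1) ∧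
      ∀ δ > (0:ℝ), ∃ w ∈ F, (∀ i, |w i - x i| < δ) ∧
        (if sg₀ = true then g x + c ≤ g w else g w ≤ g x - c) := by
    rintro x ⟨e, hcls, rfl⟩
    rw [Set.mem_preimage, Set.mem_singleton_iff, Prod.ext_iff, Prod.ext_iff] at hcls
    obtain ⟨hk0, hsg0, hm0⟩ := hcls
    simp only at hk0 hsg0 hm0
    constructor
    · have h1 := Int.floor_le (g e.1.1 * (2*(kk e.1 : ℝ)+2))
      have h2 := Int.lt_floor_add_one (g e.1.1 * (2*(kk e.1 : ℝ)+2))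
      rw [hm0, hk0] at h1 h2
      rw [hdd_def]
      exact ⟨h1, h2⟩
    · intro δ hδ
      obtain ⟨w, hwd, hwc⟩ := hksg e.1 e.2 δ hδ
      rw [hk0, hsg0] at hwc
      refine ⟨w.1, w.2, fun i => ?_, by rw [hc_def]; exact hwc⟩
      calc |w.1 i - e.1.1 i| = dist (w.1 i) (e.1.1 i) := (Real.dist_eq _ _).symm
        _ ≤ dist w.1 e.1.1 := dist_le_pi_dist _ _ i
        _ = dist w e.1 := rfl
        _ < δ := hwd
  -- helper to conclude
  have conclude : ∀ x ∈ F, ∀ y ∈ F,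
      (∀ j : Fin n, (s j = true → y j < x j) ∧ (s j = false → x j < y j)) →
      (t (Fin.last n) = true ↔ g y < g x) → x ≠ y →
      ∃ e ∈ F, ∃ e' ∈ F, e ≠ e' ∧
        Realizes t (Fin.snoc e (g e)) (Fin.snoc e' (g e')) := by
    intro x hx y hy hpat hlast hxy
    refine ⟨x, hx, y, hy, hxy, Or.inl fun i => ?_⟩
    refine Fin.lastCases ?_ (fun j => ?_) i
    · simpa using hlast
    · simp only [Fin.snoc_castSucc]
      have hts : t j.castSucc = s j := rfl
      rw [hts]
      rcases Bool.eq_false_or_eq_true (s j) with hsj | hsj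
      · rw [hsj]
        simp only [true_iff]
        exact (hpat j).1 hsj
      · rw [hsj]
        simp only [Bool.false_eq_true, false_iff, not_lt]
        exact ((hpat j).2 hsj).le
  -- Step 4: the main construction
  have main : ∀ u, u ∈ S' → ∀ v, v ∈ S' → u ≠ v →
      (∀ i, (s i = true → v i < u i) ∧ (s i = false → u i < v i)) →
      ∃ e ∈ F, ∃ e' ∈ F, e ≠ e' ∧
        Realizes t (Fin.snoc e (g e)) (Fin.snoc e' (g e')) := by
    intro u hu v hv huv hp
    obtain ⟨⟨hub1, hub2⟩, hwitu⟩ := hprop u hu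
    obtain ⟨⟨hvb1, hvb2⟩, hwitv⟩ := hprop v hv
    have huF := hS'F hu
    have hvF := hS'F hv
    obtain ⟨δ, hδpos, hδle⟩ : ∃ δ > (0:ℝ), ∀ i, δ ≤ |u i - v i| := by
      refine ⟨Finset.univ.inf' Finset.univ_nonempty (fun i => |u i - v i|), ?_,
        fun i => Finset.inf'_le _ (Finset.mem_univ i)⟩
      rw [gt_iff_lt, Finset.lt_inf'_iff]
      intro i _
      rcases Bool.eq_false_or_eq_true (s i) with hsi | hsi
      · exact abs_pos.2 (sub_ne_zero.2 (ne_of_gt ((hp i).1 hsi)))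
      · exact abs_pos.2 (sub_ne_zero.2 (ne_of_lt ((hp i).2 hsi)))
    have habs : ∀ i, (s i = true → δ ≤ u i - v i) ∧ (s i = false → δ ≤ v i - u i) := by
      intro i
      constructor
      · intro hsi; have h := hδle i
        rwa [abs_of_pos (sub_pos.2 ((hp i).1 hsi))] at h
      · intro hsi; have h := hδle i
        rw [abs_sub_comm] at h
        rwa [abs_of_pos (sub_pos.2 ((hp i).2 hsi))] at h
    have patU : ∀ w : Fin n → ℝ, (∀ i, |w i - u i| < δ) →
        ∀ j, (s j = true → v j < w j) ∧ (s j = false → w j < v j) := by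
      intro w hw j
      have h1 := (abs_lt.1 (hw j)).1
      have h2 := (abs_lt.1 (hw j)).2
      exact ⟨fun hsj => by linarith [(habs j).1 hsj],
             fun hsj => by linarith [(habs j).2 hsj]⟩
    have patV : ∀ w : Fin n → ℝ, (∀ i, |w i - v i| < δ) →
        ∀ j, (s j = true → w j < u j) ∧ (s j = false → u j < w j) := by
      intro w hw j
      have h1 := (abs_lt.1 (hw j)).1
      have h2 := (abs_lt.1 (hw j)).2
      exact ⟨fun hsj => by linarith [(habs j).1 hsj],
             fun hsj => by linarith [(habs j).2 hsj]⟩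
    rcases Bool.eq_false_or_eq_true sg₀ with hsg | hsg <;>
      rcases Bool.eq_false_or_eq_true (t (Fin.last n)) with hb | hb
    · -- sg₀ = true, b = true : witness above u, pair (w, v)
      obtain ⟨w, hwF, hwd, hwc⟩ := hwitu δ hδpos
      rw [if_pos hsg] at hwc
      have hexp : (g u + c) * dd = g u * dd + 2 := by rw [add_mul, hcd]
      have hg : g v < g w := by
        refine (mul_lt_mul_iff_left₀ hdd).1 ?_
        have hmul := mul_le_mul_of_nonneg_right hwc hdd.le
        linarith
      refine conclude w hwF v hvF (patU w hwd) (by rw [hb]; simp [hg]) ?_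
      intro h; rw [h] at hg; exact lt_irrefl _ hg
    · -- sg₀ = true, b = false : witness above v, pair (u, w)
      obtain ⟨w, hwF, hwd, hwc⟩ := hwitv δ hδpos
      rw [if_pos hsg] at hwc
      have hexp : (g v + c) * dd = g v * dd + 2 := by rw [add_mul, hcd]
      have hg : g u < g w := by
        refine (mul_lt_mul_iff_left₀ hdd).1 ?_
        have hmul := mul_le_mul_of_nonneg_right hwc hdd.le
        linarith
      refine conclude u huF w hwF (patV w hwd) (by rw [hb]; simp [not_lt.2 hg.le]) ?_
      intro h; rw [h] at hg; exact lt_irrefl _ hg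
    · -- sg₀ = false, b = true : witness below v, pair (u, w)
      obtain ⟨w, hwF, hwd, hwc⟩ := hwitv δ hδpos
      rw [if_neg (by simp [hsg])] at hwc
      have hexp : (g v - c) * dd = g v * dd - 2 := by rw [sub_mul, hcd]
      have hg : g w < g u := by
        refine (mul_lt_mul_iff_left₀ hdd).1 ?_
        have hmul := mul_le_mul_of_nonneg_right hwc hdd.le
        linarith
      refine conclude u huF w hwF (patV w hwd) (by rw [hb]; simp [hg]) ?_
      intro h; rw [h] at hg; exact lt_irrefl _ hg
    · -- sg₀ = false, b = false : witness below u, pair (w, v)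
      obtain ⟨w, hwF, hwd, hwc⟩ := hwitu δ hδpos
      rw [if_neg (by simp [hsg])] at hwc
      have hexp : (g u - c) * dd = g u * dd - 2 := by rw [sub_mul, hcd]
      have hg : g w < g v := by
        refine (mul_lt_mul_iff_left₀ hdd).1 ?_
        have hmul := mul_le_mul_of_nonneg_right hwc hdd.le
        linarith
      refine conclude w hwF v hvF (patU w hwd) (by rw [hb]; simp [not_lt.2 hg.le]) ?_
      intro h; rw [h] at hg; exact lt_irrefl _ hg
  -- Step 5: apply entangledness to S'
  obtain ⟨u, hu, v, hv, huv, hre⟩ := hE.2 S' (fun e he i => hFE e (hS'F he) i)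
    (fun e he => hinj e (hS'F he)) (hdisj.mono hS'F) hS'card s
  have hduv : ∀ i j, u i ≠ v j := hdisj (hS'F hu) (hS'F hv) huv
  rcases hre with h1 | h2
  · refine main u hu v hv huv fun i => ⟨fun hsi => (h1 i).1 hsi, fun hsi => ?_⟩
    have : ¬ v i < u i := fun hlt => by rw [(h1 i).2 hlt] at hsi; exact Bool.noConfusion hsi
    exact lt_of_le_of_ne (not_lt.1 this) (hduv i i)
  · refine main v hv u hu (Ne.symm huv) fun i => ⟨fun hsi => (h2 i).1 hsi, fun hsi => ?_⟩
    have : ¬ u i < v i := fun hlt => by rw [(h2 i).2 hlt] at hsi; exact Bool.noConfusion hsi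
    exact lt_of_le_of_ne (not_lt.1 this) (Ne.symm (hduv i i))
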